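/- Let u_l > u_r, ρ_l, ρ_r > 0, and for ε ∈ (0, η) let (u*_ε, ρ*_ε), s₁(ε), s₂(ε) be as in the two-shock Riemann solution: u_r < u*_ε < u_l, ρ*_ε > max(ρ_l, ρ_r), (u*_ε − u_l)²·(ρ*_ε + ρ_l)/2 = ε·(ρ*_ε − ρ_l)·(p(ρ*_ε) − p(ρ_l)), (u*_ε − u_r)²·(ρ*_ε + ρ_r)/2 = ε·(ρ*_ε − ρ_r)·(p(ρ*_ε) − p(ρ_r)), s₁(ε) = (u*_ε + u_l)/2 + ε·(p(ρ*_ε) − p(ρ_l))/(u*_ε − u_l), s₂(ε) = (u*_ε + u_r)/2 + ε·(p(ρ*_ε) − p(ρ_r))/(u*_ε − u_r). Then ε·e^{ρ*_ε}·(s₂(ε) − s₁(ε)) → 0 as ε → 0⁺. -/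

import Mathlib

open Real Filter Topology

/-- The pressure-like function `p(ρ) = ∫₀^ρ ξ·e^ξ dξ`. -/
noncomputable def p (ρ : ℝ) : ℝ := ∫ ξ in (0:ℝ)..ρ, ξ * Real.exp ξ

lemma p_intble (a b : ℝ) : IntervalIntegrable (fun ξ => ξ * Real.exp ξ) MeasureTheory.volume a b :=
  (continuous_id.mul Real.continuous_exp).intervalIntegrable a b

lemma p_eq (ρ : ℝ) : p ρ = (ρ - 1) * Real.exp ρ + 1 := by
  have h : ∀ x ∈ Set.uIcc (0:ℝ) ρ,
      HasDerivAt (fun x => (x - 1) * Real.exp x) (x * Real.exp x) x := by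
    intro x _
    have h1 := ((hasDerivAt_id x).sub_const 1).mul (Real.hasDerivAt_exp x)
    exact h1.congr_deriv (by simp; ring)
  have h2 := intervalIntegral.integral_eq_sub_of_hasDerivAt h (p_intble 0 ρ)
  rw [p, h2]
  norm_num

lemma p_mono {a b : ℝ} (ha : 0 ≤ a) (hab : a ≤ b) : p a ≤ p b := by
  have h : p b = p a + ∫ ξ in a..b, ξ * Real.exp ξ := by
    rw [p, p, intervalIntegral.integral_add_adjacent_intervals (p_intble 0 a) (p_intble a b)]
  rw [h]
  have h0 : 0 ≤ ∫ ξ in a..b, ξ * Real.exp ξ :=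
    intervalIntegral.integral_nonneg hab
      (fun x hx => mul_nonneg (le_trans ha hx.1) (Real.exp_pos x).le)
  linarith

lemma p_nonneg {a : ℝ} (ha : 0 ≤ a) : 0 ≤ p a := by
  have h0 : p 0 = 0 := by simp [p]
  have := p_mono (le_refl (0:ℝ)) ha
  linarith

lemma aux_exp (ε R C : ℝ) (hε : 0 < ε) (hR : 3 ≤ R)
    (hεp : ε * ((R - 1) * Real.exp R + 1) ≤ C) :
    ε * Real.exp R * R ≤ 3 / 2 * C := by
  nlinarith [mul_nonneg (mul_nonneg hε.le (Real.exp_pos R).le) (show (0:ℝ) ≤ R - 3 by linarith),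
    hε.le]

set_option maxHeartbeats 1000000 in
/-- `ε·e^{ρ*_ε}·(s₂(ε) − s₁(ε)) → 0` as `ε → 0⁺` for the two-shock Riemann solution. -/
theorem stmt13 (ul ur ρl ρr η : ℝ) (hu : ur < ul) (hρl : 0 < ρl) (hρr : 0 < ρr)
    (hη : 0 < η) (us ρs s1 s2 : ℝ → ℝ)
    (hmem : ∀ ε ∈ Set.Ioo (0:ℝ) η, ur < us ε ∧ us ε < ul ∧ max ρl ρr < ρs ε)
    (heq1 : ∀ ε ∈ Set.Ioo (0:ℝ) η,
      (us ε - ul) ^ 2 * (ρs ε + ρl) / 2 = ε * (ρs ε - ρl) * (p (ρs ε) - p ρl))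
    (heq2 : ∀ ε ∈ Set.Ioo (0:ℝ) η,
      (us ε - ur) ^ 2 * (ρs ε + ρr) / 2 = ε * (ρs ε - ρr) * (p (ρs ε) - p ρr))
    (hs1 : ∀ ε, s1 ε = (us ε + ul) / 2 + ε * (p (ρs ε) - p ρl) / (us ε - ul))
    (hs2 : ∀ ε, s2 ε = (us ε + ur) / 2 + ε * (p (ρs ε) - p ρr) / (us ε - ur)) :
    Tendsto (fun ε => ε * Real.exp (ρs ε) * (s2 ε - s1 ε)) (𝓝[>] (0:ℝ)) (𝓝 0) := by
  have hD : 0 < ul - ur := by linarith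
  have hpρl : 0 ≤ p ρl := p_nonneg hρl.le
  have hpρr : 0 ≤ p ρr := p_nonneg hρr.le
  set C : ℝ := (ul - ur) ^ 2 + η * p ρl with hC
  have hCpos : 0 < C := by positivity
  -- lower bound on ε * p (ρs ε)
  have hlow : ∀ ε ∈ Set.Ioo (0:ℝ) η, (ul - ur) ^ 2 / 8 ≤ ε * p (ρs ε) := by
    intro ε hε
    obtain ⟨h1, h2, h3⟩ := hmem ε hε
    have hεpos : 0 < ε := hε.1
    have hRl : ρl < ρs ε := lt_of_le_of_lt (le_max_left _ _) h3
    have hRr : ρr < ρs ε := lt_of_le_of_lt (le_max_right _ _) h3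
    have hR0 : 0 < ρs ε := lt_trans hρl hRl
    have hΔl : 0 ≤ p (ρs ε) - p ρl := sub_nonneg.mpr (p_mono hρl.le hRl.le)
    have hΔr : 0 ≤ p (ρs ε) - p ρr := sub_nonneg.mpr (p_mono hρr.le hRr.le)
    have hpR : 0 ≤ p (ρs ε) := p_nonneg hR0.le
    have e1 := heq1 ε hε
    have e2 := heq2 ε hε
    have b1 : (us ε - ul) ^ 2 ≤ 2 * (ε * p (ρs ε)) := by
      nlinarith [mul_nonneg (mul_nonneg hεpos.le hΔl) hρl.le,
        mul_nonneg (mul_nonneg hεpos.le hpρl) (show (0:ℝ) ≤ ρs ε - ρl by linarith),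
        mul_nonneg (mul_nonneg hεpos.le hpR) hρl.le]
    have b2 : (us ε - ur) ^ 2 ≤ 2 * (ε * p (ρs ε)) := by
      nlinarith [mul_nonneg (mul_nonneg hεpos.le hΔr) hρr.le,
        mul_nonneg (mul_nonneg hεpos.le hpρr) (show (0:ℝ) ≤ ρs ε - ρr by linarith),
        mul_nonneg (mul_nonneg hεpos.le hpR) hρr.le]
    nlinarith [sq_nonneg (ul + ur - 2 * us ε)]
  -- ρs tends to infinity
  have hρtop : Tendsto ρs (𝓝[>] (0:ℝ)) atTop := by
    rw [tendsto_atTop]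
    intro M
    set M' := max M 0 with hM'
    have hM0 : (0:ℝ) ≤ M' := le_max_right _ _
    have hpM : 0 ≤ p M' := p_nonneg hM0
    set δ := min η (((ul - ur) ^ 2 / 8) / (p M' + 1)) with hδdef
    have hδ : 0 < δ := lt_min hη (by positivity)
    filter_upwards [Ioo_mem_nhdsGT_of_mem (show (0:ℝ) ∈ Set.Ico 0 δ from ⟨le_refl 0, hδ⟩)]
      with ε hε
    have hεη : ε ∈ Set.Ioo (0:ℝ) η := ⟨hε.1, lt_of_lt_of_le hε.2 (min_le_left _ _)⟩
    have hεsmall : ε < ((ul - ur) ^ 2 / 8) / (p M' + 1) :=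
      lt_of_lt_of_le hε.2 (min_le_right _ _)
    have hl := hlow ε hεη
    obtain ⟨_, _, h3⟩ := hmem ε hεη
    have hR0 : 0 < ρs ε := lt_trans hρl (lt_of_le_of_lt (le_max_left _ _) h3)
    by_contra hcon
    push_neg at hcon
    have hRM : ρs ε ≤ M' := le_trans hcon.le (le_max_left _ _)
    have hpRM : p (ρs ε) ≤ p M' := p_mono hR0.le hRM
    have h5 : ε * (p M' + 1) < (ul - ur) ^ 2 / 8 :=
      (lt_div_iff₀ (by positivity)).mp hεsmall
    nlinarith [mul_le_mul_of_nonneg_left hpRM hε.1.le]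
  set K : ℝ := 3 * C * (ul - ur) * (ρl + ρr) with hK
  have hKtend : Tendsto (fun ε => K / ρs ε) (𝓝[>] (0:ℝ)) (𝓝 0) :=
    tendsto_const_nhds.div_atTop hρtop
  have hev : ∀ᶠ ε in 𝓝[>] (0:ℝ),
      0 ≤ ε * Real.exp (ρs ε) * (s2 ε - s1 ε) ∧
      ε * Real.exp (ρs ε) * (s2 ε - s1 ε) ≤ K / ρs ε := by
    filter_upwards [Ioo_mem_nhdsGT_of_mem (show (0:ℝ) ∈ Set.Ico 0 η from ⟨le_refl 0, hη⟩),
      hρtop.eventually_ge_atTop (3 * ρl + 3 * ρr + 3)] with ε hε hB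
    obtain ⟨h1, h2, h3⟩ := hmem ε hε
    have hεpos : 0 < ε := hε.1
    have hRl : ρl < ρs ε := lt_of_le_of_lt (le_max_left _ _) h3
    have hRr : ρr < ρs ε := lt_of_le_of_lt (le_max_right _ _) h3
    have hR3 : (3:ℝ) ≤ ρs ε := by linarith
    have hRl3 : 3 * ρl ≤ ρs ε := by linarith
    have hRr3 : 3 * ρr ≤ ρs ε := by linarith
    have hR0 : 0 < ρs ε := by linarith
    have hne1 : us ε - ul ≠ 0 := by intro h; nlinarith [sub_eq_zero.mp h]
    have hne2 : us ε - ur ≠ 0 := by intro h; nlinarith [sub_eq_zero.mp h]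
    have hdl : 0 < ρs ε - ρl := by linarith
    have hdr : 0 < ρs ε - ρr := by linarith
    have e1' := heq1 ε hε
    have e2' := heq2 ε hε
    have e1 : ε * (p (ρs ε) - p ρl) / (us ε - ul) =
        (us ε - ul) * (ρs ε + ρl) / (2 * (ρs ε - ρl)) := by
      rw [div_eq_div_iff hne1 (by positivity)]
      linear_combination -2 * e1'
    have e2 : ε * (p (ρs ε) - p ρr) / (us ε - ur) =
        (us ε - ur) * (ρs ε + ρr) / (2 * (ρs ε - ρr)) := by
      rw [div_eq_div_iff hne2 (by positivity)]
      linear_combination -2 * e2'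
    have hkey : s2 ε - s1 ε =
        (us ε - ur) * ρr / (ρs ε - ρr) + (ul - us ε) * ρl / (ρs ε - ρl) := by
      rw [hs2 ε, hs1 ε, e2, e1]
      field_simp
      ring
    -- bounds on s2 - s1
    have hs_nonneg : 0 ≤ s2 ε - s1 ε := by
      rw [hkey]
      have t1 : 0 ≤ (us ε - ur) * ρr / (ρs ε - ρr) :=
        div_nonneg (mul_nonneg (by linarith) hρr.le) hdr.le
      have t2 : 0 ≤ (ul - us ε) * ρl / (ρs ε - ρl) :=
        div_nonneg (mul_nonneg (by linarith) hρl.le) hdl.le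
      linarith
    have ht1 : (us ε - ur) * ρr / (ρs ε - ρr) ≤ 2 * (ul - ur) * ρr / ρs ε := by
      rw [div_le_div_iff₀ hdr hR0]
      nlinarith [mul_nonneg (mul_nonneg hD.le hρr.le) (show (0:ℝ) ≤ ρs ε - 2 * ρr by linarith),
        mul_le_mul_of_nonneg_right (show us ε - ur ≤ ul - ur by linarith)
          (mul_nonneg hρr.le hR0.le)]
    have ht2 : (ul - us ε) * ρl / (ρs ε - ρl) ≤ 2 * (ul - ur) * ρl / ρs ε := by
      rw [div_le_div_iff₀ hdl hR0]
      nlinarith [mul_nonneg (mul_nonneg hD.le hρl.le) (show (0:ℝ) ≤ ρs ε - 2 * ρl by linarith),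
        mul_le_mul_of_nonneg_right (show ul - us ε ≤ ul - ur by linarith)
          (mul_nonneg hρl.le hR0.le)]
    have hs_le : s2 ε - s1 ε ≤ (2 * (ul - ur) * ρr + 2 * (ul - ur) * ρl) / ρs ε := by
      rw [hkey, add_div]
      exact add_le_add ht1 ht2
    -- upper bound on ε * p (ρs ε)
    have hΔl : 0 ≤ p (ρs ε) - p ρl := sub_nonneg.mpr (p_mono hρl.le hRl.le)
    have hUlsq : (us ε - ul) ^ 2 ≤ (ul - ur) ^ 2 := by nlinarith
    have hεΔ : ε * (p (ρs ε) - p ρl) ≤ (ul - ur) ^ 2 := by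
      nlinarith [mul_nonneg (mul_nonneg hεpos.le hΔl) (show (0:ℝ) ≤ ρs ε - 3 * ρl by linarith),
        mul_le_mul_of_nonneg_right hUlsq (show (0:ℝ) ≤ ρs ε + ρl by linarith)]
    have hεp : ε * p (ρs ε) ≤ C := by
      have hexpand : ε * p (ρs ε) = ε * (p (ρs ε) - p ρl) + ε * p ρl := by ring
      have hεl : ε * p ρl ≤ η * p ρl := mul_le_mul_of_nonneg_right hε.2.le hpρl
      rw [hC]; linarith
    -- exponential bound
    have h0 : 0 ≤ ε * Real.exp (ρs ε) := by positivity
    rw [p_eq (ρs ε)] at hεp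
    have hεe : ε * Real.exp (ρs ε) * ρs ε ≤ 3 / 2 * C := aux_exp ε (ρs ε) C hεpos hR3 hεp
    constructor
    · exact mul_nonneg h0 hs_nonneg
    · rw [le_div_iff₀ hR0]
      have hs_le' : s2 ε - s1 ε ≤ 2 * (ul - ur) * ρr + 2 * (ul - ur) * ρl := by
        have hnum : 0 ≤ 2 * (ul - ur) * ρr + 2 * (ul - ur) * ρl := by
          nlinarith [mul_nonneg hD.le hρr.le, mul_nonneg hD.le hρl.le]
        have := div_le_self hnum (show (1:ℝ) ≤ ρs ε by linarith)
        linarith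
      have m1 : ε * Real.exp (ρs ε) * ρs ε * (s2 ε - s1 ε) ≤ 3 / 2 * C * (s2 ε - s1 ε) :=
        mul_le_mul_of_nonneg_right hεe hs_nonneg
      have m2 : 3 / 2 * C * (s2 ε - s1 ε) ≤
          3 / 2 * C * (2 * (ul - ur) * ρr + 2 * (ul - ur) * ρl) :=
        mul_le_mul_of_nonneg_left hs_le' (by linarith)
      rw [hK]
      calc ε * Real.exp (ρs ε) * (s2 ε - s1 ε) * ρs ε
          = ε * Real.exp (ρs ε) * ρs ε * (s2 ε - s1 ε) := by ring
        _ ≤ 3 / 2 * C * (s2 ε - s1 ε) := m1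
        _ ≤ 3 / 2 * C * (2 * (ul - ur) * ρr + 2 * (ul - ur) * ρl) := m2
        _ = 3 * C * (ul - ur) * (ρl + ρr) := by ring
  exact tendsto_of_tendsto_of_tendsto_of_le_of_le' tendsto_const_nhds hKtend
    (hev.mono fun ε h => h.1) (hev.mono fun ε h => h.2)
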